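/- In the independent exponential family model with uniform priors, if for all pairs (k,k') the sets A_{kk'} ∪ B_{kk'} ⊆ {1,...,J_max} for some finite J_max, then the conditional class probability π_k(x) (which a priori depends on all coordinates x_1, x_2, ...) depends only on x_1,...,x_{J_max}; equivalently π_k = π_k^{(J)} for all J ≥ J_max. -/
import Mathlib


open Finset Real

/-- In the independent exponential family model with uniform priors, if for every
pair `(k,k')` the index sets where the density factors differ are contained in
`{0,...,Jmax-1}`, then the conditional class probability
`π_k(x) = h_k(x)/∑_ℓ h_ℓ(x)` depends only on the first `Jmax` coordinates. -/
theorem exp_family_truncated_posterior (K : ℕ) (hK : 0 < K)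
    (η : Fin K → ℕ → ℝ) (U W : Fin K → ℕ → ℝ → ℝ)
    (h : Fin K → (ℕ → ℝ) → ℝ)
    (hsum : ∀ (k : Fin K) (x : ℕ → ℝ), Summable (fun j : ℕ => η k j * U k j (x j) + W k j (x j)))
    (hdef : ∀ (k : Fin K) (x : ℕ → ℝ), h k x = Real.exp (∑' j : ℕ, (η k j * U k j (x j) + W k j (x j))))
    (Jmax : ℕ)
    (htail : ∀ (k k' : Fin K) (j : ℕ), Jmax ≤ j →
      (∀ t : ℝ, η k j * U k j t = η k' j * U k' j t) ∧
        (∀ t : ℝ, W k j t = W k' j t)) :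
    ∀ (k : Fin K) (x y : ℕ → ℝ), (∀ j < Jmax, x j = y j) →
      h k x / (∑ l, h l x) = h k y / (∑ l, h l y) := by
  intro k x y hxy
  set k0 : Fin K := ⟨0, hK⟩ with hk0
  have key : ∀ (z : ℕ → ℝ) (l : Fin K),
      h l z = Real.exp (∑ j ∈ Finset.range Jmax, (η l j * U l j (z j) + W l j (z j)))
        * Real.exp (∑' i : ℕ, (η k0 (i + Jmax) * U k0 (i + Jmax) (z (i + Jmax))
            + W k0 (i + Jmax) (z (i + Jmax)))) := by
    intro z l
    rw [hdef, ← Real.exp_add]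
    congr 1
    rw [← Summable.sum_add_tsum_nat_add Jmax (hsum l z)]
    congr 1
    exact tsum_congr fun i => by
      obtain ⟨h1, h2⟩ := htail l k0 (i + Jmax) (Nat.le_add_left _ _)
      rw [h1, h2]
  set S : Fin K → ℝ := fun l => ∑ j ∈ Finset.range Jmax, (η l j * U l j (x j) + W l j (x j))
    with hS
  have hSxy : ∀ l : Fin K,
      (∑ j ∈ Finset.range Jmax, (η l j * U l j (y j) + W l j (y j))) = S l := by
    intro l
    exact Finset.sum_congr rfl fun j hj => by rw [← hxy j (Finset.mem_range.mp hj)]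
  set Ex : ℝ := Real.exp (∑' i : ℕ, (η k0 (i + Jmax) * U k0 (i + Jmax) (x (i + Jmax))
      + W k0 (i + Jmax) (x (i + Jmax)))) with hEx
  set Ey : ℝ := Real.exp (∑' i : ℕ, (η k0 (i + Jmax) * U k0 (i + Jmax) (y (i + Jmax))
      + W k0 (i + Jmax) (y (i + Jmax)))) with hEy
  have hx : ∀ l, h l x = Real.exp (S l) * Ex := fun l => key x l
  have hy : ∀ l, h l y = Real.exp (S l) * Ey := fun l => by rw [key y l, hSxy l]
  have hsx : (∑ l, h l x) = (∑ l, Real.exp (S l)) * Ex := by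
    rw [Finset.sum_mul]; exact Finset.sum_congr rfl fun l _ => hx l
  have hsy : (∑ l, h l y) = (∑ l, Real.exp (S l)) * Ey := by
    rw [Finset.sum_mul]; exact Finset.sum_congr rfl fun l _ => hy l
  rw [hx k, hy k, hsx, hsy, mul_div_mul_right _ _ (Real.exp_ne_zero _),
    mul_div_mul_right _ _ (Real.exp_ne_zero _)]
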